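/- Let A ⊆ S_j ⊂ F_q^d with j ≠ 0, and B ⊆ F_q^d, and μ(t) = #{(a,b) ∈ A×B : ‖a−b‖ = t}. Then Σ_{t∈F_q} μ(t)² ≤ |A|²|B|²/q + q^{d−1}|A||B| + q^{−2} η^d(−1) G₁^d |A| Σ_{b,b'∈B} Σ_{s,r∈F_q^*} η^d(r) χ(jr + s²‖b'−b‖/r) χ(s(‖b'‖−‖b‖)). -/

import Mathlib

open Finset

section helpers
variable {F : Type*} [Field F] [Fintype F] [DecidableEq F]

lemma aux_char_ne_two (hodd : Odd (Fintype.card F)) : ringChar F ≠ 2 := by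
  intro h
  have h2 := FiniteField.even_card_of_char_two (F := F) h
  rw [Nat.odd_iff] at hodd
  omega

lemma aux_two_ne_zero (hodd : Odd (Fintype.card F)) : (2 : F) ≠ 0 :=
  Ring.two_ne_zero (aux_char_ne_two hodd)

variable (η : F → ℂ) (hη0 : η 0 = 0)
    (hη1 : ∀ s : F, s ≠ 0 → IsSquare s → η s = 1)
    (hη2 : ∀ s : F, s ≠ 0 → ¬IsSquare s → η s = -1)

include hη0 hη1 hη2 in
lemma aux_eta_eq (hodd : Odd (Fintype.card F)) (s : F) :
    η s = ((quadraticChar F s : ℤ) : ℂ) := by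
  rcases eq_or_ne s 0 with rfl | hs
  · simp [hη0]
  by_cases h : IsSquare s
  · rw [hη1 s hs h, (quadraticChar_one_iff_isSquare hs).mpr h]; norm_num
  · rw [hη2 s hs h, quadraticChar_neg_one_iff_not_isSquare.mpr h]; norm_num

include hη0 hη1 hη2 in
lemma aux_eta_mul (hodd : Odd (Fintype.card F)) (a b : F) :
    η (a * b) = η a * η b := by
  rw [aux_eta_eq η hη0 hη1 hη2 hodd, aux_eta_eq η hη0 hη1 hη2 hodd,
    aux_eta_eq η hη0 hη1 hη2 hodd, map_mul]
  push_cast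
  ring

include hη0 hη1 hη2 in
lemma aux_eta_sq (hodd : Odd (Fintype.card F)) {a : F} (ha : a ≠ 0) :
    η a * η a = 1 := by
  rw [aux_eta_eq η hη0 hη1 hη2 hodd, ← Complex.ofReal_intCast, ← Complex.ofReal_mul,
    ← Int.cast_mul, ← sq, quadraticChar_sq_one ha]
  norm_num

end helpers

section chars
variable {F : Type*} [Field F] [Fintype F] [DecidableEq F]
variable (χ : AddChar F ℂ) (η : F → ℂ)

lemma aux_sum_char (hχ : χ ≠ 1) (x : F) :
    ∑ s : F, χ (s * x) = if x = 0 then (Fintype.card F : ℂ) else 0 :=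
by
  rw [AddChar.sum_mulShift x (AddChar.IsPrimitive.of_ne_one hχ)]
  split_ifs <;> simp

lemma aux_count (hodd : Odd (Fintype.card F)) (hη0 : η 0 = 0)
    (hη1 : ∀ s : F, s ≠ 0 → IsSquare s → η s = 1)
    (hη2 : ∀ s : F, s ≠ 0 → ¬IsSquare s → η s = -1)
    (f : F → ℂ) : ∑ x : F, f (x ^ 2) = ∑ y : F, (1 + η y) * f y := by
  have hcard : ∀ y : F, ((univ.filter (fun x : F => x ^ 2 = y)).card : ℂ) = 1 + η y := by
    intro y
    have h := quadraticChar_card_sqrts (aux_char_ne_two hodd) y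
    rw [Set.toFinset_setOf] at h
    rw [aux_eta_eq η hη0 hη1 hη2 hodd y]
    have : ((univ.filter (fun x : F => x ^ 2 = y)).card : ℤ) = quadraticChar F y + 1 := h
    rw [show ((univ.filter (fun x : F => x ^ 2 = y)).card : ℂ)
        = ((((univ.filter (fun x : F => x ^ 2 = y)).card : ℤ)) : ℂ) by push_cast; ring, this]
    push_cast
    ring
  calc ∑ x : F, f (x ^ 2) = ∑ x : F, ∑ y : F, if x ^ 2 = y then f y else 0 := by
        simp
    _ = ∑ y : F, ∑ x : F, if x ^ 2 = y then f y else 0 := Finset.sum_comm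
    _ = ∑ y : F, (1 + η y) * f y := by
        refine Finset.sum_congr rfl fun y _ => ?_
        rw [← Finset.sum_filter, Finset.sum_const, nsmul_eq_mul, hcard]

end chars

section chars2
variable {F : Type*} [Field F] [Fintype F] [DecidableEq F]
variable (χ : AddChar F ℂ) (η : F → ℂ)

lemma aux_map_sum {ι : Type*} (t : Finset ι) (f : ι → F) :
    χ (∑ i ∈ t, f i) = ∏ i ∈ t, χ (f i) := by
  induction t using Finset.cons_induction with
  | empty => simp
  | cons a t ha ih => rw [Finset.sum_cons, Finset.prod_cons, AddChar.map_add_eq_mul, ih]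

variable (hodd : Odd (Fintype.card F)) (hχ : χ ≠ 1) (hη0 : η 0 = 0)
    (hη1 : ∀ s : F, s ≠ 0 → IsSquare s → η s = 1)
    (hη2 : ∀ s : F, s ≠ 0 → ¬IsSquare s → η s = -1)

include hodd hη0 hη1 hη2 in
lemma aux_eta_inv {s : F} (hs : s ≠ 0) : η s⁻¹ = η s := by
  have h1 : η 1 = 1 := hη1 1 one_ne_zero ⟨1, (mul_one 1).symm⟩
  have h2 : η s⁻¹ * η s = 1 := by
    rw [← aux_eta_mul η hη0 hη1 hη2 hodd, inv_mul_cancel₀ hs, h1]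
  have h3 : η s * η s = 1 := aux_eta_sq η hη0 hη1 hη2 hodd hs
  calc η s⁻¹ = η s⁻¹ * (η s * η s) := by rw [h3, mul_one]
    _ = (η s⁻¹ * η s) * η s := by ring
    _ = η s := by rw [h2, one_mul]

include hodd hη0 hη1 hη2 in
lemma aux_sum_eta_chi {s : F} (hs : s ≠ 0) :
    ∑ y : F, η y * χ (s * y) = η s * ∑ y : F, η y * χ y := by
  have := Fintype.sum_bijective (fun z : F => s⁻¹ * z)
    (Equiv.mulLeft₀ s⁻¹ (inv_ne_zero hs)).bijective
    (fun z => η (s⁻¹ * z) * χ (s * (s⁻¹ * z))) (fun y => η y * χ (s * y)) (fun z => rfl)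
  rw [← this]
  rw [Finset.mul_sum]
  refine Finset.sum_congr rfl fun z _ => ?_
  rw [aux_eta_mul η hη0 hη1 hη2 hodd, aux_eta_inv η hodd hη0 hη1 hη2 hs,
    mul_inv_cancel_left₀ hs]
  ring

include hodd hχ hη0 hη1 hη2 in
lemma aux_gauss {s : F} (hs : s ≠ 0) :
    ∑ x : F, χ (s * x ^ 2) = η s * ∑ y : F, η y * χ y := by
  rw [aux_count η hodd hη0 hη1 hη2 (fun y => χ (s * y))]
  simp_rw [add_mul, one_mul]
  rw [Finset.sum_add_distrib]
  have h0 : ∑ y : F, χ (s * y) = 0 := by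
    have := aux_sum_char χ hχ s
    simp_rw [mul_comm] at this
    rw [this, if_neg hs]
  rw [h0, zero_add, aux_sum_eta_chi χ η hodd hη0 hη1 hη2 hs]

include hodd hχ hη0 hη1 hη2 in
lemma aux_complete {r : F} (hr : r ≠ 0) (c : F) :
    ∑ x : F, χ (r * x ^ 2 + c * x)
      = η r * (∑ y : F, η y * χ y) * χ (-(c ^ 2) / (4 * r)) := by
  have h2 : (2 : F) ≠ 0 := aux_two_ne_zero hodd
  have h4 : (4 : F) ≠ 0 := by
    intro h
    apply h2
    have : (4 : F) = 2 * 2 := by norm_num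
    rw [this] at h
    exact (mul_self_eq_zero).mp h
  have key : ∀ x : F, r * (x - c / (2 * r)) ^ 2 + c * (x - c / (2 * r))
      = r * x ^ 2 + -(c ^ 2) / (4 * r) := by
    intro x
    field_simp
    ring
  have hbij := Fintype.sum_bijective (fun x : F => x - c / (2 * r))
    (Equiv.subRight (c / (2 * r))).bijective
    (fun x => χ (r * (x - c / (2 * r)) ^ 2 + c * (x - c / (2 * r))))
    (fun x => χ (r * x ^ 2 + c * x)) (fun x => rfl)
  rw [← hbij]
  simp_rw [key, AddChar.map_add_eq_mul, ← Finset.sum_mul]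
  rw [aux_gauss χ η hodd hχ hη0 hη1 hη2 hr]

end chars2

section dim
variable {F : Type*} [Field F] [Fintype F] [DecidableEq F]
variable (χ : AddChar F ℂ) (η : F → ℂ)
variable (hodd : Odd (Fintype.card F)) (hχ : χ ≠ 1) (hη0 : η 0 = 0)
    (hη1 : ∀ s : F, s ≠ 0 → IsSquare s → η s = 1)
    (hη2 : ∀ s : F, s ≠ 0 → ¬IsSquare s → η s = -1)
    (d : ℕ)

include hodd hχ hη0 hη1 hη2 in
lemma aux_prod_complete {r : F} (hr : r ≠ 0) (c : Fin d → F) :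
    ∑ x : Fin d → F, χ (r * (∑ i, x i ^ 2) + ∑ i, c i * x i)
      = η r ^ d * (∑ y : F, η y * χ y) ^ d * χ (-(∑ i, c i ^ 2) / (4 * r)) := by
  have h1 : ∀ x : Fin d → F, r * (∑ i, x i ^ 2) + ∑ i, c i * x i
      = ∑ i, (r * x i ^ 2 + c i * x i) := by
    intro x; rw [Finset.mul_sum, Finset.sum_add_distrib]
  simp_rw [h1, aux_map_sum]
  calc ∑ x : Fin d → F, ∏ i, χ (r * x i ^ 2 + c i * x i)
      = ∏ i : Fin d, ∑ y : F, χ (r * y ^ 2 + c i * y) := by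
        rw [Finset.prod_univ_sum, Fintype.piFinset_univ]
    _ = ∏ i : Fin d, (η r * (∑ y : F, η y * χ y) * χ (-(c i ^ 2) / (4 * r))) :=
        Finset.prod_congr rfl fun i _ =>
          aux_complete χ η hodd hχ hη0 hη1 hη2 hr (c i)
    _ = η r ^ d * (∑ y : F, η y * χ y) ^ d * ∏ i : Fin d, χ (-(c i ^ 2) / (4 * r)) := by
        rw [Finset.prod_mul_distrib, Finset.prod_mul_distrib, Finset.prod_const,
          Finset.prod_const, Finset.card_univ, Fintype.card_fin]
    _ = η r ^ d * (∑ y : F, η y * χ y) ^ d * χ (-(∑ i, c i ^ 2) / (4 * r)) := by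
        rw [← aux_map_sum]
        congr 1
        rw [← Finset.sum_div, Finset.sum_neg_distrib, neg_div]

include hχ in
lemma aux_prod_zero (c : Fin d → F) :
    ∑ x : Fin d → F, χ (∑ i, c i * x i)
      = if c = 0 then ((Fintype.card F : ℂ)) ^ d else 0 := by
  simp_rw [aux_map_sum]
  rw [show ∑ x : Fin d → F, ∏ i, χ (c i * x i) = ∏ i : Fin d, ∑ y : F, χ (c i * y) from
    (Fintype.prod_sum fun i y => χ (c i * y)).symm]
  have hfac : ∀ i : Fin d, ∑ y : F, χ (c i * y) = if c i = 0 then (Fintype.card F : ℂ) else 0 := by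
    intro i
    simp_rw [mul_comm (c i)]
    exact aux_sum_char χ hχ (c i)
  simp_rw [hfac]
  by_cases hc : c = 0
  · subst hc; simp
  · rw [if_neg hc]
    obtain ⟨i, hi⟩ : ∃ i, c i ≠ 0 := by
      by_contra h
      push_neg at h
      exact hc (funext h)
    exact Finset.prod_eq_zero (Finset.mem_univ i) (by rw [if_neg hi])

include hodd hχ hη0 hη1 hη2 in
lemma aux_sphere (j : F) (m : Fin d → F) :
    (Fintype.card F : ℂ) *
        ∑ x ∈ univ.filter (fun x : Fin d → F => ∑ i, x i ^ 2 = j), χ (∑ i, m i * x i)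
      = (if m = 0 then ((Fintype.card F : ℂ)) ^ d else 0)
        + (∑ y : F, η y * χ y) ^ d *
          ∑ r ∈ univ.filter (fun r : F => r ≠ 0),
            η r ^ d * (χ (-(j * r)) * χ (-(∑ i, m i ^ 2) / (4 * r))) := by
  have step1 : (Fintype.card F : ℂ) *
      ∑ x ∈ univ.filter (fun x : Fin d → F => ∑ i, x i ^ 2 = j), χ (∑ i, m i * x i)
      = ∑ x : Fin d → F, (∑ r : F, χ (r * ((∑ i, x i ^ 2) - j))) * χ (∑ i, m i * x i) := by
    rw [Finset.sum_filter, Finset.mul_sum]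
    refine Finset.sum_congr rfl fun x _ => ?_
    rw [aux_sum_char χ hχ]
    simp only [sub_eq_zero]
    by_cases h : (∑ i, x i ^ 2) = j
    · simp [h]
    · simp [h]
  rw [step1]
  have step2 : ∀ x : Fin d → F, (∑ r : F, χ (r * ((∑ i, x i ^ 2) - j))) * χ (∑ i, m i * x i)
      = ∑ r : F, χ (-(j * r)) * χ (r * (∑ i, x i ^ 2) + ∑ i, m i * x i) := by
    intro x
    rw [Finset.sum_mul]
    refine Finset.sum_congr rfl fun r _ => ?_
    rw [← AddChar.map_add_eq_mul, ← AddChar.map_add_eq_mul]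
    congr 1
    ring
  simp_rw [step2]
  rw [Finset.sum_comm]
  rw [← Finset.sum_erase_add _ _ (Finset.mem_univ (0 : F)), Finset.filter_ne']
  have step3 : ∑ x : Fin d → F, χ (-(j * 0)) * χ (0 * (∑ i, x i ^ 2) + ∑ i, m i * x i)
      = if m = 0 then ((Fintype.card F : ℂ)) ^ d else 0 := by
    simp only [mul_zero, neg_zero, AddChar.map_zero_eq_one, one_mul, zero_mul, zero_add]
    exact aux_prod_zero χ hχ d m
  rw [step3, add_comm]
  congr 1
  rw [Finset.mul_sum]
  refine Finset.sum_congr rfl fun r hr => ?_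
  rw [Finset.mem_erase] at hr
  rw [← Finset.mul_sum, aux_prod_complete χ η hodd hχ hη0 hη1 hη2 d hr.1 m]
  ring

end dim

theorem stmt_19 {F : Type*} [Field F] [Fintype F] [DecidableEq F]
    (hodd : Odd (Fintype.card F))
    (χ : AddChar F ℂ) (hχ : χ ≠ 1)
    (η : F → ℂ) (hη0 : η 0 = 0)
    (hη1 : ∀ s : F, s ≠ 0 → IsSquare s → η s = 1)
    (hη2 : ∀ s : F, s ≠ 0 → ¬IsSquare s → η s = -1)
    (d : ℕ) (j : F) (hj : j ≠ 0)
    (A B : Finset (Fin d → F)) (hA : ∀ a ∈ A, ∑ i, (a i) ^ 2 = j) :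
    ∑ t : F, ((((A ×ˢ B).filter (fun p => ∑ i, (p.1 i - p.2 i) ^ 2 = t)).card : ℝ)) ^ 2 ≤
      (A.card : ℝ) ^ 2 * (B.card : ℝ) ^ 2 / (Fintype.card F) +
      (Fintype.card F : ℝ) ^ (d - 1) * A.card * B.card +
      (((Fintype.card F : ℂ) ^ 2)⁻¹ * η (-1) ^ d *
        (∑ s ∈ Finset.univ.filter (fun s : F => s ≠ 0), η s * χ s) ^ d * (A.card : ℂ) *
        ∑ b ∈ B, ∑ b' ∈ B,
          ∑ s ∈ Finset.univ.filter (fun s : F => s ≠ 0),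
            ∑ r ∈ Finset.univ.filter (fun r : F => r ≠ 0),
              η r ^ d * χ (j * r + s ^ 2 * (∑ i, (b' i - b i) ^ 2) / r) *
                χ (s * ((∑ i, (b' i) ^ 2) - ∑ i, (b i) ^ 2))).re := by
  classical
  set q : ℕ := Fintype.card F with hq
  have hq1 : 1 ≤ q := Fintype.card_pos
  have hq0R : (0:ℝ) < (q:ℝ) := by positivity
  have hqC : (q:ℂ) ≠ 0 := by
    simpa using (Nat.cast_ne_zero (R := ℂ)).mpr (by omega)
  set sfil : Finset F := univ.filter (fun s : F => s ≠ 0) with hsfil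
  set Gs : ℂ := ∑ y : F, η y * χ y with hGs
  set Z : ℂ := ∑ b ∈ B, ∑ b' ∈ B,
          ∑ s ∈ sfil, ∑ r ∈ sfil,
              η r ^ d * χ (j * r + s ^ 2 * (∑ i, (b' i - b i) ^ 2) / r) *
                χ (s * ((∑ i, (b' i) ^ 2) - ∑ i, (b i) ^ 2)) with hZ
  set N : ℝ := ∑ t : F,
    ((((A ×ˢ B).filter (fun p => ∑ i, (p.1 i - p.2 i) ^ 2 = t)).card : ℝ)) ^ 2 with hN
  have hGfil : (∑ s ∈ sfil, η s * χ s) = Gs := by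
    rw [hGs, hsfil, Finset.sum_filter_of_ne]
    intro x _ hx
    intro h0
    rw [h0, hη0, zero_mul] at hx
    exact hx rfl
  rw [hGfil]
  set M : F → ℂ := fun s => ∑ p ∈ A ×ˢ B, χ (s * ∑ i, (p.1 i - p.2 i) ^ 2) with hM
  set U : (Fin d → F) → F → ℂ := fun x s =>
    ∑ b ∈ B, χ (s * (∑ i, (b i) ^ 2) - 2 * s * (∑ i, x i * b i)) with hU
  set Y : F → ℂ := fun s => ∑ b ∈ B, ∑ b' ∈ B, ∑ r ∈ sfil,
      η r ^ d * (χ (-(j * r)) * χ (-(s ^ 2 * (∑ i, (b' i - b i) ^ 2)) / r)) *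
        χ (s * ((∑ i, (b i) ^ 2) - ∑ i, (b' i) ^ 2)) with hY
  set Sj : Finset (Fin d → F) := univ.filter (fun x => ∑ i, x i ^ 2 = j) with hSj
  -- Claim 1
  have claim1 : (q:ℝ) * N = ((A.card : ℝ) * B.card) ^ 2 + ∑ s ∈ sfil, Complex.normSq (M s) := by
    have hNc : N = ∑ p ∈ A ×ˢ B, ∑ p' ∈ A ×ˢ B,
        (if (∑ i, (p.1 i - p.2 i) ^ 2) = (∑ i, (p'.1 i - p'.2 i) ^ 2) then (1:ℝ) else 0) := by
      rw [hN]
      have per_t : ∀ t : F, ((((A ×ˢ B).filter (fun p => ∑ i, (p.1 i - p.2 i) ^ 2 = t)).card : ℝ)) ^ 2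
          = ∑ p ∈ A ×ˢ B, ∑ p' ∈ A ×ˢ B,
            (if ((∑ i, (p.1 i - p.2 i) ^ 2) = t ∧ (∑ i, (p'.1 i - p'.2 i) ^ 2) = t)
              then (1:ℝ) else 0) := by
        intro t
        rw [Finset.card_filter]
        push_cast
        rw [sq, Finset.sum_mul_sum]
        refine Finset.sum_congr rfl fun p _ => Finset.sum_congr rfl fun p' _ => ?_
        by_cases h1 : (∑ i, (p.1 i - p.2 i) ^ 2) = t <;>
          by_cases h2 : (∑ i, (p'.1 i - p'.2 i) ^ 2) = t <;>
          simp [h1, h2]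
      simp_rw [per_t]
      rw [Finset.sum_comm]
      refine Finset.sum_congr rfl fun p _ => ?_
      rw [Finset.sum_comm]
      refine Finset.sum_congr rfl fun p' _ => ?_
      by_cases hab : (∑ i, (p.1 i - p.2 i) ^ 2) = (∑ i, (p'.1 i - p'.2 i) ^ 2)
      · rw [if_pos hab, ← hab]
        simp
      · rw [if_neg hab]
        apply Finset.sum_eq_zero
        intro t _
        rw [if_neg]
        rintro ⟨ht1, ht2⟩
        exact hab (ht1.trans ht2.symm)
    have key : ∑ s : F, M s * (starRingEnd ℂ) (M s) = ((q:ℝ) * N : ℝ) := by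
      have conjM : ∀ s : F, (starRingEnd ℂ) (M s)
          = ∑ p' ∈ A ×ˢ B, χ (-(s * ∑ i, (p'.1 i - p'.2 i) ^ 2)) := by
        intro s
        rw [hM]
        rw [map_sum]
        exact Finset.sum_congr rfl fun p' _ => (AddChar.map_neg_eq_conj χ _).symm
      have expand : ∀ s : F, M s * (starRingEnd ℂ) (M s)
          = ∑ p ∈ A ×ˢ B, ∑ p' ∈ A ×ˢ B,
              χ (s * ((∑ i, (p.1 i - p.2 i) ^ 2) - (∑ i, (p'.1 i - p'.2 i) ^ 2))) := by
        intro s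
        rw [conjM, hM]
        rw [Finset.sum_mul_sum]
        refine Finset.sum_congr rfl fun p _ => Finset.sum_congr rfl fun p' _ => ?_
        rw [← AddChar.map_add_eq_mul]
        congr 1
        ring
      simp_rw [expand]
      rw [Finset.sum_comm]
      have inner : ∀ p ∈ A ×ˢ B, ∑ s : F, ∑ p' ∈ A ×ˢ B,
          χ (s * ((∑ i, (p.1 i - p.2 i) ^ 2) - (∑ i, (p'.1 i - p'.2 i) ^ 2)))
          = ∑ p' ∈ A ×ˢ B, (if (∑ i, (p.1 i - p.2 i) ^ 2) = (∑ i, (p'.1 i - p'.2 i) ^ 2)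
              then (q:ℂ) else 0) := by
        intro p _
        rw [Finset.sum_comm]
        refine Finset.sum_congr rfl fun p' _ => ?_
        rw [aux_sum_char χ hχ]
        simp [sub_eq_zero, hq]
      rw [Finset.sum_congr rfl inner]
      rw [hNc]
      push_cast
      rw [Finset.mul_sum]
      refine Finset.sum_congr rfl fun p _ => ?_
      rw [Finset.mul_sum]
      refine Finset.sum_congr rfl fun p' _ => ?_
      by_cases hab : (∑ i, (p.1 i - p.2 i) ^ 2) = (∑ i, (p'.1 i - p'.2 i) ^ 2) <;>
        simp [hab]
    have hsum_normSq : ∑ s : F, Complex.normSq (M s) = (q:ℝ) * N := by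
      have := congrArg Complex.re key
      rw [Complex.re_sum] at this
      simp_rw [Complex.mul_conj] at this
      simpa using this
    have hM0 : M 0 = ((A.card : ℂ) * B.card) := by
      rw [hM]
      simp [Finset.card_product]
    have hsplit : ∑ s : F, Complex.normSq (M s)
        = Complex.normSq (M 0) + ∑ s ∈ sfil, Complex.normSq (M s) := by
      rw [← Finset.sum_erase_add _ _ (Finset.mem_univ (0 : F)), add_comm, hsfil,
        Finset.filter_ne']
    rw [← hsum_normSq, hsplit, hM0]
    congr 1
    rw [Complex.normSq_mul]
    simp [Complex.normSq_natCast]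
    ring
  -- Claim 2 : Cauchy-Schwarz etc.
  have hMfac : ∀ s : F, M s = χ (s * j) * ∑ a ∈ A, U a s := by
    intro s
    rw [hM, hU]
    simp only []
    rw [Finset.sum_product, Finset.mul_sum]
    refine Finset.sum_congr rfl fun a ha => ?_
    rw [Finset.mul_sum]
    refine Finset.sum_congr rfl fun b hb => ?_
    rw [← AddChar.map_add_eq_mul]
    congr 1
    have hQab : ∑ i, (a i - b i) ^ 2
        = (∑ i, a i ^ 2) - 2 * (∑ i, a i * b i) + ∑ i, b i ^ 2 := by
      have h : ∀ i : Fin d, (a i - b i) ^ 2 = a i ^ 2 - 2 * (a i * b i) + b i ^ 2 :=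
        fun i => by ring
      rw [Finset.sum_congr rfl fun i _ => h i, Finset.sum_add_distrib,
        Finset.sum_sub_distrib, Finset.mul_sum]
    rw [hQab, hA a ha]
    ring
  have hAsub : A ⊆ Sj := fun a ha => by
    rw [hSj, Finset.mem_filter]
    exact ⟨Finset.mem_univ a, hA a ha⟩
  have claim2 : ∀ s ∈ sfil, Complex.normSq (M s) ≤
      (A.card : ℝ) * ∑ x ∈ Sj, Complex.normSq (U x s) := by
    intro s _
    rw [hMfac s, Complex.normSq_mul]
    have hone : Complex.normSq (χ (s * j)) = 1 := by
      have h1 : ((Complex.normSq (χ (s * j)) : ℝ) : ℂ) = 1 := by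
        rw [← Complex.mul_conj, ← AddChar.map_neg_eq_conj, ← AddChar.map_add_eq_mul]
        simp
      exact_mod_cast h1
    rw [hone, one_mul]
    calc Complex.normSq (∑ a ∈ A, U a s) = ‖∑ a ∈ A, U a s‖ ^ 2 := by
          rw [← Complex.sq_norm]
      _ ≤ (∑ a ∈ A, ‖U a s‖) ^ 2 := by
          have hns := norm_sum_le A (fun a => U a s)
          exact pow_le_pow_left₀ (norm_nonneg _) hns 2
      _ ≤ (A.card : ℝ) * ∑ a ∈ A, ‖U a s‖ ^ 2 := sq_sum_le_card_mul_sum_sq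
      _ ≤ (A.card : ℝ) * ∑ x ∈ Sj, ‖U x s‖ ^ 2 := by
          refine mul_le_mul_of_nonneg_left ?_ (Nat.cast_nonneg _)
          refine Finset.sum_le_sum_of_subset_of_nonneg hAsub fun x _ _ => by positivity
      _ = (A.card : ℝ) * ∑ x ∈ Sj, Complex.normSq (U x s) := by
          congr 1
          exact Finset.sum_congr rfl fun x _ => by
            rw [← Complex.sq_norm]
  -- Claim 3 : sphere identity
  have h2F : (2 : F) ≠ 0 := aux_two_ne_zero hodd
  have h4F : (4 : F) ≠ 0 := by
    intro h
    exact h2F (by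
      have h22 : (4 : F) = 2 * 2 := by norm_num
      rw [h22] at h
      exact mul_self_eq_zero.mp h)
  have claim3 : ∀ s ∈ sfil, (q:ℝ) * ∑ x ∈ Sj, Complex.normSq (U x s)
      = (q:ℝ)^d * B.card + (Gs ^ d * Y s).re := by
    intro s hs
    rw [hsfil, Finset.mem_filter] at hs
    have hsne : s ≠ 0 := hs.2
    have h2s : 2 * s ≠ 0 := mul_ne_zero h2F hsne
    -- sphere formula specialized
    have hW : ∀ b' b : Fin d → F, (q:ℂ) * ∑ x ∈ Sj, χ (∑ i, (2 * s * (b' i - b i)) * x i)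
        = (if b' = b then ((q:ℂ))^d else 0)
          + Gs ^ d * ∑ r ∈ sfil, η r ^ d *
              (χ (-(j * r)) * χ (-(s^2 * ∑ i, (b' i - b i)^2) / r)) := by
      intro b' b
      have h := aux_sphere χ η hodd hχ hη0 hη1 hη2 d j (fun i => 2 * s * (b' i - b i))
      rw [← hSj, ← hGs, ← hsfil] at h
      rw [h]
      congr 1
      · -- the delta term
        by_cases hbb : b' = b
        · subst hbb
          rw [if_pos rfl, if_pos (funext fun i => by simp)]
        · rw [if_neg hbb, if_neg]
          intro h0
          apply hbb
          funext i
          have := congrFun h0 i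
          simp only [Pi.zero_apply] at this
          rcases mul_eq_zero.mp this with h1 | h1
          · exact absurd h1 h2s
          · linear_combination h1
      · -- the r-sum
        congr 1
        refine Finset.sum_congr rfl fun r hr => ?_
        rw [hsfil, Finset.mem_filter] at hr
        have hrne : r ≠ 0 := hr.2
        congr 3
        have hsum4 : ∑ i, (2 * s * (b' i - b i)) ^ 2 = 4 * s^2 * ∑ i, (b' i - b i) ^ 2 := by
          rw [Finset.mul_sum]
          exact Finset.sum_congr rfl fun i _ => by ring
        rw [hsum4]
        field_simp
    -- the complex identity
    have cx : (q:ℂ) * ∑ x ∈ Sj, U x s * (starRingEnd ℂ) (U x s)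
        = (q:ℂ)^d * (B.card:ℂ) + Gs ^ d * Y s := by
      have expand : ∀ x : Fin d → F, U x s * (starRingEnd ℂ) (U x s)
          = ∑ b ∈ B, ∑ b' ∈ B,
              χ (s * ((∑ i, (b i) ^ 2) - ∑ i, (b' i) ^ 2)) *
                χ (∑ i, (2 * s * (b' i - b i)) * x i) := by
        intro x
        rw [hU]
        simp only []
        rw [map_sum, Finset.sum_mul_sum]
        refine Finset.sum_congr rfl fun b _ => Finset.sum_congr rfl fun b' _ => ?_
        rw [← AddChar.map_neg_eq_conj, ← AddChar.map_add_eq_mul, ← AddChar.map_add_eq_mul]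
        congr 1
        have hm : ∑ i, (2 * s * (b' i - b i)) * x i
            = 2 * s * (∑ i, x i * b' i) - 2 * s * (∑ i, x i * b i) := by
          rw [Finset.mul_sum, Finset.mul_sum, ← Finset.sum_sub_distrib]
          exact Finset.sum_congr rfl fun i _ => by ring
        rw [hm]
        ring
      simp_rw [expand]
      rw [Finset.sum_comm]
      have swap2 : ∀ b ∈ B, ∑ x ∈ Sj, ∑ b' ∈ B,
          χ (s * ((∑ i, (b i) ^ 2) - ∑ i, (b' i) ^ 2)) * χ (∑ i, (2 * s * (b' i - b i)) * x i)
          = ∑ b' ∈ B, χ (s * ((∑ i, (b i) ^ 2) - ∑ i, (b' i) ^ 2)) *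
              ∑ x ∈ Sj, χ (∑ i, (2 * s * (b' i - b i)) * x i) := by
        intro b _
        rw [Finset.sum_comm]
        exact Finset.sum_congr rfl fun b' _ => by rw [Finset.mul_sum]
      rw [Finset.sum_congr rfl swap2, Finset.mul_sum]
      have perb : ∀ b ∈ B, (q:ℂ) * ∑ b' ∈ B,
          χ (s * ((∑ i, (b i) ^ 2) - ∑ i, (b' i) ^ 2)) *
            ∑ x ∈ Sj, χ (∑ i, (2 * s * (b' i - b i)) * x i)
          = (q:ℂ)^d + Gs ^ d * ∑ b' ∈ B, ∑ r ∈ sfil, η r ^ d *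
              (χ (-(j * r)) * χ (-(s^2 * ∑ i, (b' i - b i)^2) / r)) *
              χ (s * ((∑ i, (b i) ^ 2) - ∑ i, (b' i) ^ 2)) := by
        intro b hb
        rw [Finset.mul_sum]
        have perb' : ∀ b' ∈ B, (q:ℂ) *
            (χ (s * ((∑ i, (b i) ^ 2) - ∑ i, (b' i) ^ 2)) *
              ∑ x ∈ Sj, χ (∑ i, (2 * s * (b' i - b i)) * x i))
            = χ (s * ((∑ i, (b i) ^ 2) - ∑ i, (b' i) ^ 2)) * (if b' = b then ((q:ℂ))^d else 0)
              + Gs ^ d * ∑ r ∈ sfil, η r ^ d *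
                  (χ (-(j * r)) * χ (-(s^2 * ∑ i, (b' i - b i)^2) / r)) *
                  χ (s * ((∑ i, (b i) ^ 2) - ∑ i, (b' i) ^ 2)) := by
          intro b' _
          rw [show (q:ℂ) * (χ (s * ((∑ i, (b i) ^ 2) - ∑ i, (b' i) ^ 2)) *
              ∑ x ∈ Sj, χ (∑ i, (2 * s * (b' i - b i)) * x i))
            = χ (s * ((∑ i, (b i) ^ 2) - ∑ i, (b' i) ^ 2)) *
              ((q:ℂ) * ∑ x ∈ Sj, χ (∑ i, (2 * s * (b' i - b i)) * x i)) by ring]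
          rw [hW b' b]
          rw [mul_add]
          congr 1
          rw [mul_comm, mul_assoc]
          congr 1
          rw [Finset.sum_mul]
        rw [Finset.sum_congr rfl perb']
        rw [Finset.sum_add_distrib]
        congr 1
        · -- diagonal
          simp_rw [mul_ite, mul_zero]
          rw [Finset.sum_ite_eq' B b]
          rw [if_pos hb, sub_self, mul_zero, AddChar.map_zero_eq_one, one_mul]
        · rw [← Finset.mul_sum]
      rw [Finset.sum_congr rfl perb, Finset.sum_add_distrib, Finset.sum_const,
        nsmul_eq_mul, ← Finset.mul_sum]
      have hYs : Y s = ∑ b ∈ B, ∑ b' ∈ B, ∑ r ∈ sfil, η r ^ d *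
          (χ (-(j * r)) * χ (-(s^2 * ∑ i, (b' i - b i)^2) / r)) *
          χ (s * ((∑ i, (b i) ^ 2) - ∑ i, (b' i) ^ 2)) := by rw [hY]
      rw [hYs]
      ring
    -- take real parts
    have hreal : ∑ x ∈ Sj, U x s * (starRingEnd ℂ) (U x s)
        = (((∑ x ∈ Sj, Complex.normSq (U x s) : ℝ)) : ℂ) := by
      push_cast
      exact Finset.sum_congr rfl fun x _ => (Complex.mul_conj _)
    rw [hreal] at cx
    have hre2 := congrArg Complex.re cx
    rw [show ((q:ℕ):ℂ) = (((q:ℕ):ℝ):ℂ) by push_cast; ring, Complex.re_ofReal_mul,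
      Complex.ofReal_re, Complex.add_re] at hre2
    rw [hre2]
    congr 1
    have hcast : ((((q:ℕ):ℝ):ℂ) ^ d * ((B.card : ℕ):ℂ)) = (((q:ℝ)^d * (B.card:ℝ) : ℝ) : ℂ) := by
      push_cast
      ring
    rw [hcast, Complex.ofReal_re]
  -- Claim 4 : reindexing
  have negsum : ∀ f : F → ℂ, ∑ s ∈ sfil, f s = ∑ s ∈ sfil, f (-s) := by
    intro f
    refine Finset.sum_equiv (Equiv.neg F) (fun x => ?_) (fun x hx => ?_)
    · simp [hsfil]
    · simp
  have claim4 : Gs ^ d * ∑ s ∈ sfil, Y s = η (-1) ^ d * Gs ^ d * Z := by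
    have pers : ∀ s : F, Y (-s) = η (-1) ^ d * ∑ b ∈ B, ∑ b' ∈ B, ∑ r ∈ sfil,
        η r ^ d * χ (j * r + s ^ 2 * (∑ i, (b' i - b i) ^ 2) / r) *
          χ (s * ((∑ i, (b' i) ^ 2) - ∑ i, (b i) ^ 2)) := by
      intro s
      rw [hY]
      simp only []
      rw [Finset.mul_sum]
      refine Finset.sum_congr rfl fun b _ => ?_
      rw [Finset.mul_sum]
      refine Finset.sum_congr rfl fun b' _ => ?_
      -- inner r-sum
      rw [negsum (fun r => η r ^ d *
        (χ (-(j * r)) * χ (-((-s) ^ 2 * ∑ i, (b' i - b i) ^ 2) / r)) *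
        χ (-s * ((∑ i, (b i) ^ 2) - ∑ i, (b' i) ^ 2)))]
      conv_rhs => rw [Finset.mul_sum]
      refine Finset.sum_congr rfl fun r _ => ?_
      have h1 : η (-r) = η (-1) * η r := by
        rw [show (-r : F) = -1 * r by ring, aux_eta_mul η hη0 hη1 hη2 hodd]
      have h2 : χ (-(j * -r)) = χ (j * r) := by
        congr 1
        ring
      have h3 : χ (-((-s) ^ 2 * ∑ i, (b' i - b i) ^ 2) / -r)
          = χ (s ^ 2 * (∑ i, (b' i - b i) ^ 2) / r) := by
        congr 1
        rw [neg_sq, neg_div_neg_eq]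
      have h4 : χ (-s * ((∑ i, (b i) ^ 2) - ∑ i, (b' i) ^ 2))
          = χ (s * ((∑ i, (b' i) ^ 2) - ∑ i, (b i) ^ 2)) := by
        congr 1
        ring
      rw [h1, h2, h3, h4, mul_pow]
      rw [show χ (j * r) * χ (s ^ 2 * (∑ i, (b' i - b i) ^ 2) / r)
          = χ (j * r + s ^ 2 * (∑ i, (b' i - b i) ^ 2) / r) from
        (AddChar.map_add_eq_mul χ _ _).symm]
      ring
    have hmain : ∑ s ∈ sfil, Y s = η (-1) ^ d * Z := by
      rw [negsum Y]
      rw [Finset.sum_congr rfl fun s _ => pers s]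
      rw [← Finset.mul_sum, hZ]
      congr 1
      rw [Finset.sum_comm]
      refine Finset.sum_congr rfl fun b _ => ?_
      rw [Finset.sum_comm]
    rw [hmain]
    ring
  -- assembly
  have hcardsfil : (sfil.card : ℝ) = (q:ℝ) - 1 := by
    rw [hsfil, Finset.filter_ne', Finset.card_erase_of_mem (mem_univ 0), Finset.card_univ]
    rw [Nat.cast_sub hq1]
    simp [hq]
  have step : (q:ℝ)^2 * N ≤ (q:ℝ) * ((A.card : ℝ) * B.card) ^ 2
      + ((q:ℝ) - 1) * (q:ℝ)^d * A.card * B.card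
      + (A.card : ℝ) * (η (-1) ^ d * Gs ^ d * Z).re := by
    have e1 : (q:ℝ)^2 * N = (q:ℝ) * ((q:ℝ) * N) := by ring
    rw [e1, claim1, mul_add, Finset.mul_sum]
    have e2 : ∑ s ∈ sfil, (q:ℝ) * Complex.normSq (M s)
        ≤ ∑ s ∈ sfil, (A.card : ℝ) * ((q:ℝ)^d * B.card + (Gs ^ d * Y s).re) := by
      refine Finset.sum_le_sum fun s hs => ?_
      rw [← claim3 s hs]
      calc (q:ℝ) * Complex.normSq (M s)
          ≤ (q:ℝ) * ((A.card : ℝ) * ∑ x ∈ Sj, Complex.normSq (U x s)) := by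
            exact mul_le_mul_of_nonneg_left (claim2 s hs) (le_of_lt hq0R)
        _ = (A.card : ℝ) * ((q:ℝ) * ∑ x ∈ Sj, Complex.normSq (U x s)) := by ring
    have e3 : ∑ s ∈ sfil, (A.card : ℝ) * ((q:ℝ)^d * B.card + (Gs ^ d * Y s).re)
        = ((q:ℝ) - 1) * (q:ℝ)^d * A.card * B.card
          + (A.card : ℝ) * (η (-1) ^ d * Gs ^ d * Z).re := by
      have e4 : (∑ s ∈ sfil, (Gs ^ d * Y s).re) = (η (-1) ^ d * Gs ^ d * Z).re := by
        rw [← claim4, Finset.mul_sum]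
        exact (Complex.re_sum sfil _).symm
      simp_rw [mul_add, Finset.sum_add_distrib, ← Finset.mul_sum, e4]
      rw [Finset.sum_const, nsmul_eq_mul, hcardsfil]
      ring
    calc (q:ℝ) * ((A.card : ℝ) * B.card) ^ 2 + ∑ s ∈ sfil, (q:ℝ) * Complex.normSq (M s)
        ≤ (q:ℝ) * ((A.card : ℝ) * B.card) ^ 2
          + ∑ s ∈ sfil, (A.card : ℝ) * ((q:ℝ)^d * B.card + (Gs ^ d * Y s).re) := by
          exact add_le_add_right e2 _
      _ = _ := by rw [e3]; ring
  -- compare q^2 * RHS with step's RHS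
  have hpow : ((q:ℝ) - 1) * (q:ℝ)^d ≤ (q:ℝ)^2 * (q:ℝ)^(d-1) := by
    rcases d with _ | k
    · simp only [pow_zero, mul_one, Nat.zero_sub, pow_zero]
      nlinarith [hq0R]
    · have : k + 1 - 1 = k := rfl
      rw [this, pow_succ]
      nlinarith [pow_pos hq0R k, pow_nonneg (le_of_lt hq0R) k, hq0R]
  have hre : (q:ℝ)^2 * ((((q:ℂ) ^ 2)⁻¹ * η (-1) ^ d * Gs ^ d * (A.card : ℂ) * Z).re)
      = (A.card : ℝ) * (η (-1) ^ d * Gs ^ d * Z).re := by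
    have e5 : (((q:ℝ)^2 : ℝ) : ℂ) * (((q:ℂ) ^ 2)⁻¹ * η (-1) ^ d * Gs ^ d * (A.card : ℂ) * Z)
        = (((A.card : ℝ) : ℂ)) * (η (-1) ^ d * Gs ^ d * Z) := by
      push_cast
      field_simp
    calc (q:ℝ)^2 * ((((q:ℂ) ^ 2)⁻¹ * η (-1) ^ d * Gs ^ d * (A.card : ℂ) * Z).re)
        = ((((q:ℝ)^2 : ℝ) : ℂ) * (((q:ℂ) ^ 2)⁻¹ * η (-1) ^ d * Gs ^ d * (A.card : ℂ) * Z)).re := by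
          rw [Complex.re_ofReal_mul]
      _ = ((((A.card : ℝ) : ℂ)) * (η (-1) ^ d * Gs ^ d * Z)).re := by rw [e5]
      _ = _ := by rw [Complex.re_ofReal_mul]
  have final : (q:ℝ)^2 * N ≤ (q:ℝ)^2 *
      ((A.card : ℝ) ^ 2 * (B.card : ℝ) ^ 2 / (q:ℝ)
        + (q : ℝ) ^ (d - 1) * A.card * B.card
        + ((((q:ℂ) ^ 2)⁻¹ * η (-1) ^ d * Gs ^ d * (A.card : ℂ) * Z).re)) := by
    rw [mul_add, mul_add, hre]
    have t1 : (q:ℝ)^2 * ((A.card : ℝ) ^ 2 * (B.card : ℝ) ^ 2 / (q:ℝ))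
        = (q:ℝ) * ((A.card : ℝ) * B.card) ^ 2 := by
      have hq' : (q:ℝ) ≠ 0 := hq0R.ne'
      rw [sq, mul_assoc, mul_comm (q:ℝ) (_ / _), div_mul_cancel₀ _ hq']
      ring
    rw [t1]
    have t2 : ((q:ℝ) - 1) * (q:ℝ)^d * A.card * B.card
        ≤ (q:ℝ)^2 * ((q : ℝ) ^ (d - 1) * A.card * B.card) := by
      have := mul_le_mul_of_nonneg_right hpow
        (mul_nonneg (Nat.cast_nonneg A.card) (Nat.cast_nonneg B.card))
      calc ((q:ℝ) - 1) * (q:ℝ)^d * A.card * B.card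
          = ((q:ℝ) - 1) * (q:ℝ)^d * ((A.card:ℝ) * B.card) := by ring
        _ ≤ (q:ℝ)^2 * (q:ℝ)^(d-1) * ((A.card:ℝ) * B.card) := this
        _ = (q:ℝ)^2 * ((q : ℝ) ^ (d - 1) * A.card * B.card) := by ring
    linarith [step]
  have := le_of_mul_le_mul_left (by
    calc (q:ℝ)^2 * N ≤ _ := final
    ) (by positivity : (0:ℝ) < (q:ℝ)^2)
  exact this
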